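/- The Motzkin numbers satisfy 1/3 ≤ M_k / M_{k+1} ≤ 1 for all k ≥ 0. -/

import Mathlib

/-- The partial sum of the first `k` steps of a walk `w`. -/
def psum {n : ℕ} (w : Fin n → ℤ) (k : ℕ) : ℤ :=
  ∑ j ∈ Finset.univ.filter (fun j : Fin n => (j : ℕ) < k), w j

/-- `motzkinNum k` is the `k`-th Motzkin number: the number of paths from `(0,0)` to
`(k,0)` with steps `1, 0, -1` that never go below the x-axis. -/
noncomputable def motzkinNum (k : ℕ) : ℕ :=
  Nat.card {w : Fin k → ℤ //
    (∀ j, w j = 1 ∨ w j = 0 ∨ w j = -1) ∧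
    (∀ t, t ≤ k → 0 ≤ psum w t) ∧
    psum w k = 0}

namespace MotzkinAux

/-- Paths of length `k` with steps in `{1,0,-1}`, staying nonnegative, ending at height `h`. -/
def S (k : ℕ) (h : ℤ) : Set (Fin k → ℤ) :=
  {w | (∀ j, w j = 1 ∨ w j = 0 ∨ w j = -1) ∧ (∀ t, t ≤ k → 0 ≤ psum w t) ∧ psum w k = h}

lemma psum_eq_ite {n : ℕ} (w : Fin n → ℤ) (t : ℕ) :
    psum w t = ∑ j : Fin n, if (j : ℕ) < t then w j else 0 := by
  rw [psum, Finset.sum_filter]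

lemma psum_snoc {k : ℕ} (w : Fin k → ℤ) (s : ℤ) (t : ℕ) (ht : t ≤ k) :
    psum (Fin.snoc w s) t = psum w t := by
  rw [psum_eq_ite, psum_eq_ite, Fin.sum_univ_castSucc]
  simp [Fin.snoc_castSucc, Nat.not_lt.2 ht]

lemma psum_snoc_top {k : ℕ} (w : Fin k → ℤ) (s : ℤ) :
    psum (Fin.snoc w s) (k + 1) = psum w k + s := by
  rw [psum_eq_ite, psum_eq_ite, Fin.sum_univ_castSucc]
  have h1 : ∀ j : Fin k, ((j : ℕ) < k + 1) := fun j => Nat.lt_succ_of_lt j.isLt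
  have h2 : ∀ j : Fin k, ((j : ℕ) < k) := fun j => j.isLt
  simp [Fin.snoc_castSucc, h1, h2]

lemma S_finite (k : ℕ) (h : ℤ) : (S k h).Finite := by
  have hsub : S k h ⊆ Set.pi Set.univ (fun _ : Fin k => ({1, 0, -1} : Set ℤ)) := by
    intro w hw j _
    rcases hw.1 j with h | h | h <;> simp [h]
  have hfin : (Set.pi Set.univ (fun _ : Fin k => ({1, 0, -1} : Set ℤ))).Finite :=
    Set.Finite.pi (fun _ => Set.toFinite _)
  exact hfin.subset hsub

lemma S_empty_of_neg (k : ℕ) (h : ℤ) (hh : h < 0) : S k h = ∅ := by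
  ext w
  simp only [Set.mem_empty_iff_false, iff_false]
  rintro ⟨-, hnn, hend⟩
  have := hnn k le_rfl
  omega

lemma snoc_inj {k : ℕ} (s : ℤ) :
    Function.Injective (fun w : Fin k → ℤ => (Fin.snoc w s : Fin (k+1) → ℤ)) := by
  intro a b hab
  have := congrArg Fin.init hab
  simpa [Fin.init_snoc] using this

lemma mem_S_snoc {k : ℕ} {h s : ℤ} (hh : 0 ≤ h) (hs : s = 1 ∨ s = 0 ∨ s = -1)
    {w : Fin k → ℤ} (hw : w ∈ S k (h - s)) :
    (Fin.snoc w s : Fin (k+1) → ℤ) ∈ S (k+1) h := by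
  obtain ⟨hsteps, hnn, hend⟩ := hw
  refine ⟨?_, ?_, ?_⟩
  · intro j
    refine Fin.lastCases ?_ ?_ j
    · simpa using hs
    · intro i; simpa [Fin.snoc_castSucc] using hsteps i
  · intro t ht
    rcases Nat.lt_or_ge t (k+1) with h1 | h1
    · rw [psum_snoc _ _ _ (Nat.lt_succ_iff.1 h1)]
      exact hnn t (Nat.lt_succ_iff.1 h1)
    · have : t = k + 1 := le_antisymm ht h1
      subst this
      rw [psum_snoc_top, hend]; omega
  · rw [psum_snoc_top, hend]; omega

lemma S_succ_eq (k : ℕ) (h : ℤ) (hh : 0 ≤ h) :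
    S (k+1) h = (fun w => (Fin.snoc w 1 : Fin (k+1) → ℤ)) '' S k (h-1)
      ∪ (fun w => (Fin.snoc w 0 : Fin (k+1) → ℤ)) '' S k (h-0)
      ∪ (fun w => (Fin.snoc w (-1) : Fin (k+1) → ℤ)) '' S k (h-(-1)) := by
  ext w
  constructor
  · rintro ⟨hsteps, hnn, hend⟩
    have key : ∀ s : ℤ, w (Fin.last k) = s →
        Fin.init w ∈ S k (h - s) ∧ w = Fin.snoc (Fin.init w) s := by
      intro s hs
      constructor
      · refine ⟨fun i => hsteps _, ?_, ?_⟩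
        · intro t ht
          have : psum (Fin.init w) t = psum w t := by
            conv_rhs => rw [← Fin.snoc_init_self w]
            rw [psum_snoc _ _ _ ht]
          rw [this]; exact hnn t (ht.trans (Nat.le_succ k))
        · have : psum w (k+1) = psum (Fin.init w) k + w (Fin.last k) := by
            conv_lhs => rw [← Fin.snoc_init_self w]
            rw [psum_snoc_top]
          rw [hend, hs] at this
          omega
      · rw [← hs, Fin.snoc_init_self]
    rcases hsteps (Fin.last k) with hs | hs | hs
    · exact Or.inl (Or.inl ⟨Fin.init w, (key 1 hs).1, ((key 1 hs).2).symm⟩)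
    · exact Or.inl (Or.inr ⟨Fin.init w, (key 0 hs).1, ((key 0 hs).2).symm⟩)
    · exact Or.inr ⟨Fin.init w, (key (-1) hs).1, ((key (-1) hs).2).symm⟩
  · rintro ((⟨v, hv, rfl⟩ | ⟨v, hv, rfl⟩) | ⟨v, hv, rfl⟩)
    · exact mem_S_snoc hh (Or.inl rfl) hv
    · exact mem_S_snoc hh (Or.inr (Or.inl rfl)) hv
    · exact mem_S_snoc hh (Or.inr (Or.inr rfl)) hv

lemma disj_snoc {k : ℕ} {s t : ℤ} (hst : s ≠ t) (A B : Set (Fin k → ℤ)) :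
    Disjoint ((fun w => (Fin.snoc w s : Fin (k+1) → ℤ)) '' A)
      ((fun w => (Fin.snoc w t : Fin (k+1) → ℤ)) '' B) := by
  rw [Set.disjoint_left]
  rintro w ⟨v, -, rfl⟩ ⟨u, -, hu⟩
  have := congrFun hu (Fin.last k)
  simp [Fin.snoc_last] at this
  exact hst this.symm

lemma ncard_S_succ (k : ℕ) (h : ℤ) (hh : 0 ≤ h) :
    (S (k+1) h).ncard = (S k (h-1)).ncard + (S k h).ncard + (S k (h+1)).ncard := by
  rw [S_succ_eq k h hh]
  have f1 := (S_finite k (h-1)).image (fun w => (Fin.snoc w 1 : Fin (k+1) → ℤ))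
  have f0 := (S_finite k (h-0)).image (fun w => (Fin.snoc w 0 : Fin (k+1) → ℤ))
  have fm := (S_finite k (h-(-1))).image (fun w => (Fin.snoc w (-1) : Fin (k+1) → ℤ))
  rw [Set.ncard_union_eq (Set.disjoint_union_left.2
        ⟨disj_snoc (by norm_num) _ _, disj_snoc (by norm_num) _ _⟩) (f1.union f0) fm,
      Set.ncard_union_eq (disj_snoc (by norm_num) _ _) f1 f0,
      Set.ncard_image_of_injective _ (snoc_inj 1),
      Set.ncard_image_of_injective _ (snoc_inj 0),
      Set.ncard_image_of_injective _ (snoc_inj (-1))]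
  norm_num

/-- `NN m h` = number of nonnegative lattice paths of length `m` ending at height `h`. -/
def NN : ℕ → ℕ → ℕ
  | 0, 0 => 1
  | 0, _+1 => 0
  | m+1, 0 => NN m 0 + NN m 1
  | m+1, h+1 => NN m h + NN m (h+1) + NN m (h+2)

lemma psum_zero_walk (w : Fin 0 → ℤ) (t : ℕ) : psum w t = 0 := by
  rw [psum_eq_ite]
  exact Finset.sum_of_isEmpty _

lemma S_zero (h : ℤ) : S 0 h = if h = 0 then Set.univ else ∅ := by
  ext w
  by_cases hh : h = 0
  · subst hh; simp [S, psum_zero_walk, Set.mem_setOf_eq]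
  · rw [if_neg hh]
    simp only [Set.mem_empty_iff_false, iff_false]
    rintro ⟨-, -, hend⟩
    rw [psum_zero_walk] at hend
    exact hh hend.symm

lemma ncard_S_eq_NN : ∀ (k : ℕ) (h : ℕ), (S k (h : ℤ)).ncard = NN k h := by
  intro k
  induction k with
  | zero =>
    intro h
    cases h with
    | zero => rw [S_zero]; simp [NN, Set.ncard_univ]
    | succ h =>
      rw [S_zero, if_neg (by exact_mod_cast Nat.succ_ne_zero h)]
      simp [NN]
  | succ k ih =>
    intro h
    cases h with
    | zero =>
      rw [Nat.cast_zero, ncard_S_succ k 0 le_rfl]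
      have : ((0:ℤ) - 1) = -1 := by norm_num
      rw [this, S_empty_of_neg k (-1) (by norm_num)]
      have e : (0:ℤ) + 1 = ((1:ℕ):ℤ) := by norm_num
      have h0 := ih 0
      simp only [Nat.cast_zero] at h0
      rw [e, ih 1, h0]
      simp [NN]
    | succ h =>
      rw [ncard_S_succ k ((h:ℕ)+1 : ℕ) (by positivity)]
      have e1 : (((h+1:ℕ)):ℤ) - 1 = (h : ℤ) := by push_cast; ring
      have e2 : (((h+1:ℕ)):ℤ) + 1 = ((h+2 : ℕ) : ℤ) := by push_cast; ring
      rw [e1, e2, ih h, ih (h+1), ih (h+2)]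
      simp [NN]

lemma NN_pos (m : ℕ) : 1 ≤ NN m 0 := by
  induction m with
  | zero => simp [NN]
  | succ m ih => simp only [NN]; omega

/-- The key log-concavity-style inequality `(h+1)·NN m (h+1) ≤ (h+2)·NN m h`. -/
lemma NN_key : ∀ m h, (h+1) * NN m (h+1) ≤ (h+2) * NN m h := by
  intro m
  induction m with
  | zero => intro h; cases h <;> simp [NN]
  | succ m ih =>
    intro h
    cases h with
    | zero =>
      have h0 := ih 0
      have h1 := ih 1
      simp only [NN]
      linarith
    | succ h =>
      have i1 := mul_le_mul_right (ih h) ((h+3)^2)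
      have i2 := mul_le_mul_right (ih (h+1)) (h^2+5*h+5)
      have i3 := mul_le_mul_right (ih (h+2)) ((h+2)^2)
      simp only [NN]
      nlinarith [i1, i2, i3]

lemma motzkin_eq_NN (k : ℕ) : motzkinNum k = NN k 0 := by
  have : motzkinNum k = (S k (0:ℤ)).ncard := rfl
  rw [this, ← Nat.cast_zero, ncard_S_eq_NN]

lemma motzkin_mono (k : ℕ) : motzkinNum k ≤ motzkinNum (k+1) := by
  rw [motzkin_eq_NN, motzkin_eq_NN]
  simp only [NN]; omega

lemma motzkin_three (k : ℕ) : motzkinNum (k+1) ≤ 3 * motzkinNum k := by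
  rw [motzkin_eq_NN, motzkin_eq_NN]
  have h := NN_key k 0
  norm_num at h
  simp only [NN]
  omega

end MotzkinAux

/-- The Motzkin numbers satisfy `1/3 ≤ M_k / M_{k+1} ≤ 1` for all `k ≥ 0`. -/
theorem motzkin_ratio_bounds (k : ℕ) :
    (1 : ℚ) / 3 ≤ (motzkinNum k : ℚ) / (motzkinNum (k + 1) : ℚ) ∧
      (motzkinNum k : ℚ) / (motzkinNum (k + 1) : ℚ) ≤ 1 := by
  have hpos : 1 ≤ motzkinNum k := by
    rw [MotzkinAux.motzkin_eq_NN]; exact MotzkinAux.NN_pos k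
  have h1 : (motzkinNum k : ℚ) ≤ (motzkinNum (k+1) : ℚ) := by
    exact_mod_cast MotzkinAux.motzkin_mono k
  have h3 : (motzkinNum (k+1) : ℚ) ≤ 3 * (motzkinNum k : ℚ) := by
    exact_mod_cast MotzkinAux.motzkin_three k
  have ha : (0:ℚ) < (motzkinNum k : ℚ) := by exact_mod_cast hpos
  have hb : (0:ℚ) < (motzkinNum (k+1) : ℚ) := lt_of_lt_of_le ha h1
  constructor
  · rw [div_le_div_iff₀ (by norm_num) hb]
    linarith
  · rw [div_le_one hb]
    exact h1
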